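/- Union-style kernel bound for peak AoI: given positive random variables and θ > 0, the bound P(T_I + T > a) ≤ e^{−θa} E[e^{θ T_I}] · Σ_{v=1}^{u} E[e^{θ S_v}] E[e^{−θ I_v}] holds, provided T = max_{1 ≤ v ≤ u} (S_v − I_v) with T_I independent of (S_v, I_v)_v and each pair (S_v, I_v) independent. -/

import Mathlib

open MeasureTheory ProbabilityTheory Real

theorem peak_aoi_kernel_bound
    {Ω : Type*} [MeasurableSpace Ω] (μ : Measure Ω) [IsProbabilityMeasure μ]
    (u : ℕ) (hu : 1 ≤ u)
    (T_I : Ω → ℝ) (S I : Fin u → Ω → ℝ)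
    (hTI : Measurable T_I) (hS : ∀ v, Measurable (S v))
    (hI : ∀ v, Measurable (I v))
    (hTInn : ∀ ω, 0 ≤ T_I ω) (hSnn : ∀ v ω, 0 ≤ S v ω)
    (hInn : ∀ v ω, 0 ≤ I v ω)
    (hSI_indep : ∀ v, IndepFun (S v) (I v) μ)
    (hTI_indep : ∀ v, IndepFun T_I (fun ω => S v ω - I v ω) μ)
    (T : Ω → ℝ)
    (hne : (Finset.univ : Finset (Fin u)).Nonempty)
    (hT : ∀ ω, T ω = Finset.univ.sup' hne (fun v => S v ω - I v ω))
    (a θ : ℝ) (ha : 0 < a) (hθ : 0 < θ)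
    (hintTI : Integrable (fun ω => Real.exp (θ * T_I ω)) μ)
    (hintS : ∀ v, Integrable (fun ω => Real.exp (θ * S v ω)) μ)
    (hintI : ∀ v, Integrable (fun ω => Real.exp (-θ * I v ω)) μ)
    (hintProd : ∀ v, Integrable
      (fun ω => Real.exp (θ * T_I ω) * Real.exp (θ * (S v ω - I v ω))) μ) :
    (μ {ω | T_I ω + T ω > a}).toReal ≤
      Real.exp (-θ * a) * (∫ ω, Real.exp (θ * T_I ω) ∂μ) *
        ∑ v : Fin u, (∫ ω, Real.exp (θ * S v ω) ∂μ) *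
          ∫ ω, Real.exp (-θ * I v ω) ∂μ := by
  -- Step 1: the event is contained in a finite union
  have hsub : {ω | T_I ω + T ω > a} ⊆ ⋃ v : Fin u, {ω | a ≤ T_I ω + (S v ω - I v ω)} := by
    intro ω hω
    obtain ⟨v, -, hv⟩ := Finset.exists_mem_eq_sup' hne (fun v => S v ω - I v ω)
    refine Set.mem_iUnion.mpr ⟨v, ?_⟩
    have hTv : T ω = S v ω - I v ω := (hT ω).trans hv
    have hω' : a < T_I ω + T ω := hω
    simp only [Set.mem_setOf_eq]
    linarith
  -- union bound
  have hmeas : ∀ v : Fin u, MeasurableSet {ω | a ≤ T_I ω + (S v ω - I v ω)} := by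
    intro v
    exact measurableSet_le measurable_const (hTI.add ((hS v).sub (hI v)))
  have hUB : (μ {ω | T_I ω + T ω > a}).toReal ≤
      ∑ v : Fin u, (μ {ω | a ≤ T_I ω + (S v ω - I v ω)}).toReal := by
    have h1 : μ {ω | T_I ω + T ω > a} ≤ ∑ v : Fin u, μ {ω | a ≤ T_I ω + (S v ω - I v ω)} :=
      le_trans (measure_mono hsub) (measure_iUnion_fintype_le μ _)
    have h2 : ((∑ v : Fin u, μ {ω | a ≤ T_I ω + (S v ω - I v ω)})).toReal
        = ∑ v : Fin u, (μ {ω | a ≤ T_I ω + (S v ω - I v ω)}).toReal := by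
      rw [ENNReal.toReal_sum]
      intro v _
      exact measure_ne_top μ _
    calc (μ {ω | T_I ω + T ω > a}).toReal
        ≤ ((∑ v : Fin u, μ {ω | a ≤ T_I ω + (S v ω - I v ω)})).toReal := by
          apply ENNReal.toReal_mono _ h1
          rw [← h2.symm] at *
          exact ENNReal.sum_ne_top.mpr fun v _ => measure_ne_top μ _
      _ = _ := h2
  refine hUB.trans ?_
  -- Step 2: Chernoff for each v
  have hchern : ∀ v : Fin u, (μ {ω | a ≤ T_I ω + (S v ω - I v ω)}).toReal ≤
      Real.exp (-θ * a) * ∫ ω, Real.exp (θ * T_I ω) * Real.exp (θ * (S v ω - I v ω)) ∂μ := by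
    intro v
    have hint : Integrable (fun ω => Real.exp (θ * (T_I ω + (S v ω - I v ω)))) μ := by
      have := hintProd v
      refine this.congr (ae_of_all _ fun ω => ?_)
      simp only [← Real.exp_add, ← mul_add]
    have := ProbabilityTheory.measure_ge_le_exp_mul_mgf
      (X := fun ω => T_I ω + (S v ω - I v ω)) (μ := μ) (t := θ) a hθ.le hint
    refine this.trans ?_
    unfold ProbabilityTheory.mgf
    apply le_of_eq
    congr 1
    apply integral_congr_ae
    refine ae_of_all _ fun ω => ?_
    simp only [← Real.exp_add, ← mul_add]
  refine le_trans (Finset.sum_le_sum fun v _ => hchern v) ?_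
  -- Step 3: factorize each integral by independence
  have hfact : ∀ v : Fin u,
      (∫ ω, Real.exp (θ * T_I ω) * Real.exp (θ * (S v ω - I v ω)) ∂μ)
        = (∫ ω, Real.exp (θ * T_I ω) ∂μ) *
          ((∫ ω, Real.exp (θ * S v ω) ∂μ) * ∫ ω, Real.exp (-θ * I v ω) ∂μ) := by
    intro v
    have h1 : IndepFun (fun ω => Real.exp (θ * T_I ω))
        (fun ω => Real.exp (θ * (S v ω - I v ω))) μ :=
      (hTI_indep v).comp ((measurable_id.const_mul θ).exp) ((measurable_id.const_mul θ).exp)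
    have e1 := h1.integral_mul_eq_mul_integral
      (((hTI.const_mul θ).exp).aestronglyMeasurable)
      (((((hS v).sub (hI v)).const_mul θ).exp).aestronglyMeasurable)
    rw [show ((fun ω => Real.exp (θ * T_I ω)) * fun ω => Real.exp (θ * (S v ω - I v ω)))
        = fun ω => Real.exp (θ * T_I ω) * Real.exp (θ * (S v ω - I v ω)) from rfl] at e1
    rw [e1]
    congr 1
    have h2 : IndepFun (fun ω => Real.exp (θ * S v ω))
        (fun ω => Real.exp (-θ * I v ω)) μ :=
      (hSI_indep v).comp ((measurable_id.const_mul θ).exp) ((measurable_id.const_mul (-θ)).exp)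
    have e2 := h2.integral_mul_eq_mul_integral
      ((((hS v).const_mul θ).exp).aestronglyMeasurable)
      ((((hI v).const_mul (-θ)).exp).aestronglyMeasurable)
    rw [show ((fun ω => Real.exp (θ * S v ω)) * fun ω => Real.exp (-θ * I v ω))
        = fun ω => Real.exp (θ * S v ω) * Real.exp (-θ * I v ω) from rfl] at e2
    rw [← e2]
    apply integral_congr_ae
    refine ae_of_all _ fun ω => ?_
    show Real.exp (θ * (S v ω - I v ω)) = Real.exp (θ * S v ω) * Real.exp (-θ * I v ω)
    rw [← Real.exp_add]
    ring_nf
  refine le_of_eq ?_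
  have : ((Real.exp (-θ * a) * ∫ ω, Real.exp (θ * T_I ω) ∂μ) *
      ∑ v : Fin u, (∫ ω, Real.exp (θ * S v ω) ∂μ) * ∫ ω, Real.exp (-θ * I v ω) ∂μ)
      = ∑ v : Fin u, Real.exp (-θ * a) *
        ∫ ω, Real.exp (θ * T_I ω) * Real.exp (θ * (S v ω - I v ω)) ∂μ := by
    rw [Finset.mul_sum]
    exact Finset.sum_congr rfl fun v _ => by rw [hfact v]; ring
  rw [this]
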